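/- Let K be an algebraically closed field and F = K(x). Let S be a finite-dimensional K-subspace of F of dimension n, let v be one of the valuations v_α (α ∈ K) or v_∞, and let S_1 ⊂ … ⊂ S_n be the natural filtration of S with respect to v, with combinatorial genii γ_i and minimal divisors D_i. Suppose 2 ≤ i ≤ n − 1 and γ_{i+1} = γ_i. Then S_i² = S_{i−1}·S_{i+1}, and for every place P of F one has D_{i+1}(P) − D_i(P) = D_i(P) − D_{i−1}(P). -/
import Mathlib


open Polynomial

noncomputable section

namespace FFF

variable {K : Type*} [Field K] [IsAlgClosed K]

/-- Valuation of a rational function at the finite place `x - α`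
(order of vanishing at `x - α`). -/
def vA (α : K) (f : RatFunc K) : ℤ :=
  (Polynomial.rootMultiplicity α f.num : ℤ) - (Polynomial.rootMultiplicity α f.denom : ℤ)

/-- Valuation of a rational function at the place at infinity:
`deg (denominator) - deg (numerator)`. -/
def vInf (f : RatFunc K) : ℤ := -f.intDegree

/-- The places of `K(x)`: `some α` is the finite place at `α ∈ K`, `none` is the
place at infinity; `plval p` is the associated valuation. -/
def plval (p : Option K) (f : RatFunc K) : ℤ :=
  Option.elim p (vInf f) (fun α => vA α f)

/-- The degree of a rational function, `deg f = -v∞(f)`. -/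
def fdeg (f : RatFunc K) : ℤ := f.intDegree

/-- A divisor on `K(x)`: an integer for every place, zero for all but finitely many. -/
abbrev Divisor (K : Type*) [Field K] := Option K →₀ ℤ

/-- The degree of a divisor: the sum of its values. -/
def divDeg (D : Divisor K) : ℤ := D.sum fun _ n => n

/-- The Riemann–Roch space `L(D)` of a divisor `D`. -/
def RRset (D : Divisor K) : Set (RatFunc K) :=
  {f | f = 0 ∨ ∀ p : Option K, -(D p) ≤ plval p f}

/-- The subfield `K(T)` of `K(x)` generated by the constants `K` and a set `T`. -/
def Kgen (T : Set (RatFunc K)) : Subfield (RatFunc K) :=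
  Subfield.closure ((Set.range fun a : K => (RatFunc.C a : RatFunc K)) ∪ T)

/-- The combinatorial genus `γ = dim S² - 2 dim S + 1` of a subspace `S`. -/
def cgenus (S : Submodule K (RatFunc K)) : ℤ :=
  (Module.finrank K ↥(S * S) : ℤ) - 2 * (Module.finrank K ↥S : ℤ) + 1

/-- `sfil e i` is the `i`-th step (1-indexed) of the natural filtration attached to a
filtered basis `e`: the span of the first `i` basis vectors. -/
def sfil {n : ℕ} (e : Fin n → RatFunc K) (i : ℕ) : Submodule K (RatFunc K) :=
  Submodule.span K (e '' {j | (j : ℕ) < i})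

/-- `e` is a filtered basis of `S` with respect to the valuation `v`:
a basis of `S` with strictly decreasing valuations. -/
def IsFilteredBasis {n : ℕ} (v : RatFunc K → ℤ) (S : Submodule K (RatFunc K))
    (e : Fin n → RatFunc K) : Prop :=
  LinearIndependent K e ∧ Submodule.span K (Set.range e) = S ∧
    StrictAnti fun i => v (e i)

/-- `D` is the divisor of least degree with `S ⊆ L(D)`, i.e.
`D(P) = -min {v_P s : s ∈ S, s ≠ 0}` for every place `P`. -/
def IsMinDivisor (S : Submodule K (RatFunc K)) (D : Divisor K) : Prop :=
  ∀ p : Option K, IsLeast {d : ℤ | ∃ s ∈ S, s ≠ 0 ∧ plval p s = d} (-(D p))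


set_option linter.unusedSectionVars false
set_option maxHeartbeats 2000000

lemma mul_denom' (f : RatFunc K) :
    f * algebraMap K[X] (RatFunc K) f.denom = algebraMap K[X] (RatFunc K) f.num := by
  have h := RatFunc.num_div_denom f
  rw [div_eq_iff (RatFunc.algebraMap_ne_zero f.denom_ne_zero)] at h
  exact h.symm

lemma vA_eq (α : K) {a b : K[X]} (ha : a ≠ 0) (hb : b ≠ 0) {f : RatFunc K}
    (hf : f * algebraMap K[X] (RatFunc K) b = algebraMap K[X] (RatFunc K) a) :
    vA α f = (Polynomial.rootMultiplicity α a : ℤ) - Polynomial.rootMultiplicity α b := by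
  have hf0 : f ≠ 0 := by
    rintro rfl
    rw [zero_mul] at hf
    exact ha ((map_eq_zero_iff _ (RatFunc.algebraMap_injective K)).mp hf.symm)
  have key : f.num * b = a * f.denom := by
    apply RatFunc.algebraMap_injective K
    rw [map_mul, map_mul, ← mul_denom' f, mul_right_comm, hf]
  have h1 : f.num * b ≠ 0 := mul_ne_zero (RatFunc.num_ne_zero hf0) hb
  have e1 := Polynomial.rootMultiplicity_mul (x := α) h1
  have e2 := Polynomial.rootMultiplicity_mul (x := α) (key ▸ h1)
  rw [key] at e1
  unfold vA
  omega

lemma vA_mul (α : K) {f g : RatFunc K} (hf : f ≠ 0) (hg : g ≠ 0) :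
    vA α (f * g) = vA α f + vA α g := by
  have h := vA_eq α (a := f.num * g.num) (b := f.denom * g.denom)
      (mul_ne_zero (RatFunc.num_ne_zero hf) (RatFunc.num_ne_zero hg))
      (mul_ne_zero f.denom_ne_zero g.denom_ne_zero) (f := f * g) ?_
  · rw [h, Polynomial.rootMultiplicity_mul (x := α)
      (mul_ne_zero (RatFunc.num_ne_zero hf) (RatFunc.num_ne_zero hg)),
      Polynomial.rootMultiplicity_mul (x := α)
      (mul_ne_zero f.denom_ne_zero g.denom_ne_zero)]
    unfold vA
    push_cast
    ring
  · rw [map_mul, map_mul, show f * g * (algebraMap K[X] (RatFunc K) f.denom *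
      algebraMap K[X] (RatFunc K) g.denom) = (f * algebraMap K[X] (RatFunc K) f.denom) *
      (g * algebraMap K[X] (RatFunc K) g.denom) by ring, mul_denom', mul_denom']

lemma vA_add (α : K) {f g : RatFunc K} (hf : f ≠ 0) (hg : g ≠ 0) (hfg : f + g ≠ 0) :
    min (vA α f) (vA α g) ≤ vA α (f + g) := by
  set a := f.num * g.denom + g.num * f.denom with ha_def
  have hfg' : (f + g) * algebraMap K[X] (RatFunc K) (f.denom * g.denom)
      = algebraMap K[X] (RatFunc K) a := by
    rw [ha_def, map_add, map_mul, map_mul, map_mul, ← mul_denom' f, ← mul_denom' g]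
    ring
  have ha : a ≠ 0 := by
    intro h
    rw [h, map_zero] at hfg'
    exact (mul_ne_zero hfg (RatFunc.algebraMap_ne_zero
      (mul_ne_zero f.denom_ne_zero g.denom_ne_zero))) hfg'
  have h := vA_eq α ha (mul_ne_zero f.denom_ne_zero g.denom_ne_zero) hfg'
  have hm := Polynomial.rootMultiplicity_add (p := f.num * g.denom) (q := g.num * f.denom) α
    (ha_def ▸ ha)
  have e1 := Polynomial.rootMultiplicity_mul (x := α)
    (mul_ne_zero (RatFunc.num_ne_zero hf) g.denom_ne_zero)
  have e2 := Polynomial.rootMultiplicity_mul (x := α)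
    (mul_ne_zero (RatFunc.num_ne_zero hg) f.denom_ne_zero)
  have e3 := Polynomial.rootMultiplicity_mul (x := α)
    (mul_ne_zero f.denom_ne_zero g.denom_ne_zero)
  rw [h, e3]
  rw [e1, e2, ← ha_def] at hm
  unfold vA
  omega

lemma vA_C (α : K) {c : K} (hc : c ≠ 0) : vA α (RatFunc.C c) = 0 := by
  have h := vA_eq α (a := Polynomial.C c) (b := 1) (by simpa using hc) one_ne_zero
    (f := RatFunc.C c) (by rw [map_one, mul_one, RatFunc.algebraMap_C])
  rw [h, Polynomial.rootMultiplicity_C, ← Polynomial.C_1, Polynomial.rootMultiplicity_C]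
  simp

lemma plval_mul (p : Option K) {f g : RatFunc K} (hf : f ≠ 0) (hg : g ≠ 0) :
    plval p (f * g) = plval p f + plval p g := by
  cases p with
  | none =>
      simp only [plval, Option.elim, vInf, RatFunc.intDegree_mul hf hg]
      ring
  | some α => exact vA_mul α hf hg

lemma plval_add (p : Option K) {f g : RatFunc K} (hf : f ≠ 0) (hg : g ≠ 0) (hfg : f + g ≠ 0) :
    min (plval p f) (plval p g) ≤ plval p (f + g) := by
  cases p with
  | none =>
      simp only [plval, Option.elim, vInf]
      have := RatFunc.intDegree_add_le hg hfg
      omega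
  | some α => exact vA_add α hf hg hfg

lemma plval_C (p : Option K) {c : K} (hc : c ≠ 0) : plval p (RatFunc.C c) = 0 := by
  cases p with
  | none => simp [plval, Option.elim, vInf, RatFunc.intDegree_C]
  | some α => exact vA_C α hc

lemma plval_smul (p : Option K) {c : K} (hc : c ≠ 0) (f : RatFunc K) :
    plval p (c • f) = plval p f := by
  rcases eq_or_ne f 0 with rfl | hf
  · rw [smul_zero]
  · have hC : (RatFunc.C c : RatFunc K) ≠ 0 := by
      have := RatFunc.algebraMap_ne_zero (K := K) (by simpa using hc : Polynomial.C c ≠ 0)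
      rwa [RatFunc.algebraMap_C] at this
    rw [Algebra.smul_def, RatFunc.algebraMap_eq_C, plval_mul p hC hf, plval_C p hc, zero_add]

/-- The submodule of functions `f` with `f = 0` or `c ≤ plval p f`. -/
def Vsub (p : Option K) (c : ℤ) : Submodule K (RatFunc K) where
  carrier := {f | f = 0 ∨ c ≤ plval p f}
  zero_mem' := Or.inl rfl
  add_mem' := by
    rintro f g hf hg
    rcases eq_or_ne f 0 with rfl | hf0
    · simpa using hg
    rcases eq_or_ne g 0 with rfl | hg0
    · simpa using hf
    rcases eq_or_ne (f + g) 0 with h | h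
    · exact Or.inl h
    · exact Or.inr <| le_trans (le_min (hf.resolve_left hf0) (hg.resolve_left hg0))
        (plval_add p hf0 hg0 h)
  smul_mem' := by
    rintro c f hf
    rcases eq_or_ne c 0 with rfl | hc
    · simp
    rcases eq_or_ne f 0 with rfl | hf0
    · simp
    · exact Or.inr (by rw [plval_smul p hc]; exact hf.resolve_left hf0)

lemma mem_Vsub {p : Option K} {c : ℤ} {f : RatFunc K} :
    f ∈ Vsub p c ↔ f = 0 ∨ c ≤ plval p f := Iff.rfl

lemma Vsub_mono {p : Option K} {c d : ℤ} (h : c ≤ d) : Vsub p d ≤ Vsub p c := by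
  rintro f (rfl | hf)
  · exact Or.inl rfl
  · exact Or.inr (h.trans hf)

lemma Vsub_mul {p : Option K} {c d : ℤ} : Vsub p c * Vsub p d ≤ Vsub p (c + d) := by
  rw [Submodule.mul_le]
  rintro m (rfl | hm) n hn
  · simp
  rcases hn with rfl | hn
  · simp
  rcases eq_or_ne m 0 with rfl | hm0
  · simp
  rcases eq_or_ne n 0 with rfl | hn0
  · simp
  · exact Or.inr (by rw [plval_mul p hm0 hn0]; exact add_le_add hm hn)

lemma notMem_Vsub {p : Option K} {c : ℤ} {f : RatFunc K} (hf : f ≠ 0)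
    (h : plval p f < c) : f ∉ Vsub p c := by
  rintro (rfl | hle)
  · exact hf rfl
  · omega

lemma finrank_sup_span_singleton {M : Submodule K (RatFunc K)} [FiniteDimensional K M]
    {t : RatFunc K} (ht : t ∉ M) :
    Module.finrank K ↥(M ⊔ Submodule.span K {t}) = Module.finrank K ↥M + 1 := by
  have h0 : t ≠ 0 := fun h => ht (h ▸ M.zero_mem)
  haveI : FiniteDimensional K ↥(Submodule.span K ({t} : Set (RatFunc K))) :=
    FiniteDimensional.span_of_finite K (Set.finite_singleton t)
  have hinf : M ⊓ Submodule.span K {t} = ⊥ := by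
    rw [eq_bot_iff]
    rintro x ⟨hxM, hxt⟩
    obtain ⟨d, rfl⟩ := Submodule.mem_span_singleton.mp hxt
    rcases eq_or_ne d 0 with rfl | hd
    · simp
    · exact absurd ((inv_smul_smul₀ hd t) ▸ M.smul_mem d⁻¹ hxM) ht
  have h := Submodule.finrank_sup_add_finrank_inf_eq M (Submodule.span K {t})
  rw [hinf, finrank_bot, finrank_span_singleton h0] at h
  omega

lemma sfil_succ {n : ℕ} (e : Fin n → RatFunc K) {k : ℕ} (hk : k < n) :
    sfil e (k + 1) = sfil e k ⊔ Submodule.span K {e ⟨k, hk⟩} := by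
  unfold sfil
  rw [← Submodule.span_union]
  congr 1
  ext x
  constructor
  · rintro ⟨j, hj, rfl⟩
    simp only [Set.mem_setOf_eq] at hj
    rcases eq_or_ne ((j : ℕ)) k with h | h
    · exact Or.inr (by rw [show j = ⟨k, hk⟩ from Fin.ext h]; rfl)
    · exact Or.inl ⟨j, by simp only [Set.mem_setOf_eq]; omega, rfl⟩
  · rintro (⟨j, hj, rfl⟩ | h)
    · simp only [Set.mem_setOf_eq] at hj
      exact ⟨j, by simp only [Set.mem_setOf_eq]; omega, rfl⟩
    · rw [Set.mem_singleton_iff] at h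
      exact ⟨⟨k, hk⟩, by simp only [Set.mem_setOf_eq]; omega, h.symm⟩

lemma sfil_mono {n : ℕ} (e : Fin n → RatFunc K) {k l : ℕ} (h : k ≤ l) :
    sfil e k ≤ sfil e l :=
  Submodule.span_mono (Set.image_mono fun j hj => lt_of_lt_of_le hj h)

lemma mem_sfil {n : ℕ} (e : Fin n → RatFunc K) {k : ℕ} {j : Fin n} (h : (j : ℕ) < k) :
    e j ∈ sfil e k :=
  Submodule.subset_span ⟨j, h, rfl⟩

lemma sfil_le_Vsub {n : ℕ} (e : Fin n → RatFunc K) {p : Option K} {k : ℕ} {c : ℤ}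
    (hc : ∀ j : Fin n, (j : ℕ) < k → c ≤ plval p (e j)) :
    sfil e k ≤ Vsub p c := by
  apply Submodule.span_le.mpr
  rintro _ ⟨j, hj, rfl⟩
  exact Or.inr (hc j hj)

lemma sfil_fg {n : ℕ} (e : Fin n → RatFunc K) (k : ℕ) : (sfil e k).FG :=
  Submodule.fg_span (Set.Finite.image _ (Set.toFinite _))

lemma finrank_sfil {n : ℕ} {e : Fin n → RatFunc K} (hli : LinearIndependent K e)
    {k : ℕ} (hk : k ≤ n) : Module.finrank K ↥(sfil e k) = k := by
  have hset : e '' {j | (j : ℕ) < k} = Set.range (e ∘ Fin.castLE hk) := by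
    ext x
    constructor
    · rintro ⟨j, hj, rfl⟩
      exact ⟨⟨(j : ℕ), hj⟩, congrArg e (Fin.ext rfl)⟩
    · rintro ⟨j, rfl⟩
      exact ⟨Fin.castLE hk j, j.isLt, rfl⟩
  rw [sfil, hset, finrank_span_eq_card (hli.comp _ (Fin.castLE_injective hk))]
  simp


/-- If `2 ≤ i ≤ n - 1` and `γ_{i+1} = γ_i` then `S_i² = S_{i-1}·S_{i+1}`
and `D_{i+1}(P) - D_i(P) = D_i(P) - D_{i-1}(P)` for every place `P`. -/
theorem statement9 (n : ℕ) (S : Submodule K (RatFunc K))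
    (hdim : Module.finrank K ↥S = n)
    (p : Option K) (e : Fin n → RatFunc K)
    (hbasis : IsFilteredBasis (plval p) S e)
    (D : ℕ → Divisor K)
    (hD : ∀ j : ℕ, 1 ≤ j → j ≤ n → IsMinDivisor (sfil e j) (D j))
    (i : ℕ) (hi2 : 2 ≤ i) (hin : i + 1 ≤ n)
    (hg : cgenus (sfil e (i + 1)) = cgenus (sfil e i)) :
    (sfil e i * sfil e i : Submodule K (RatFunc K)) = sfil e (i - 1) * sfil e (i + 1) ∧
    ∀ q : Option K, D (i + 1) q - D i q = D i q - D (i - 1) q := by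
  obtain ⟨hli, hspan, hanti⟩ := hbasis
  have hn1 : i - 2 < n := by omega
  have hn2 : i - 1 < n := by omega
  have hn3 : i < n := by omega
  have hstep : i - 1 + 1 = i := by omega
  set I1 : Fin n := ⟨i - 2, hn1⟩ with hI1
  set I2 : Fin n := ⟨i - 1, hn2⟩ with hI2
  set I3 : Fin n := ⟨i, hn3⟩ with hI3
  have hw12 : (plval p (e I2)) < (plval p (e I1)) := hanti (show I1 < I2 by rw [Fin.lt_def]; simp [hI1, hI2]; omega)
  have hw23 : (plval p (e I3)) < (plval p (e I2)) := hanti (show I2 < I3 by rw [Fin.lt_def]; simp [hI2, hI3]; omega)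
  have he1 : e I1 ≠ 0 := hli.ne_zero I1
  have he2 : e I2 ≠ 0 := hli.ne_zero I2
  have he3 : e I3 ≠ 0 := hli.ne_zero I3
  -- valuation bounds on the filtration steps
  have hb1 : sfil e (i - 1) ≤ Vsub p (plval p (e I1)) := by
    apply sfil_le_Vsub
    intro j hj
    exact hanti.antitone (show j ≤ I1 by rw [Fin.le_def]; simp [hI1]; omega)
  have hb2 : sfil e i ≤ Vsub p (plval p (e I2)) := by
    apply sfil_le_Vsub
    intro j hj
    exact hanti.antitone (show j ≤ I2 by rw [Fin.le_def]; simp [hI2]; omega)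
  have hb3 : sfil e (i + 1) ≤ Vsub p (plval p (e I3)) := by
    apply sfil_le_Vsub
    intro j hj
    exact hanti.antitone (show j ≤ I3 by rw [Fin.le_def]; simp [hI3]; omega)
  -- finite dimensionality
  haveI hFD2 : FiniteDimensional K ↥(sfil e i * sfil e i) :=
    Module.Finite.iff_fg.mpr ((sfil_fg e i).mul (sfil_fg e i))
  haveI hFDA : FiniteDimensional K ↥(sfil e (i - 1) * sfil e i) :=
    Module.Finite.iff_fg.mpr ((sfil_fg e (i - 1)).mul (sfil_fg e i))
  haveI hFDM : FiniteDimensional K ↥(sfil e (i - 1) * sfil e (i + 1)) :=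
    Module.Finite.iff_fg.mpr ((sfil_fg e (i - 1)).mul (sfil_fg e (i + 1)))
  haveI hFDT2 : FiniteDimensional K ↥(sfil e (i + 1) * sfil e (i + 1)) :=
    Module.Finite.iff_fg.mpr ((sfil_fg e (i + 1)).mul (sfil_fg e (i + 1)))
  -- splittings
  have hsplit3 : sfil e (i + 1) = sfil e i ⊔ Submodule.span K {e I3} := sfil_succ e hn3
  have hsplit2 : sfil e i = sfil e (i - 1) ⊔ Submodule.span K {e I2} := by
    have h := sfil_succ e hn2
    rw [hstep] at h
    exact h
  -- dimension of S_{i+1}^2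
  have hBdim : Module.finrank K ↥(sfil e (i + 1) * sfil e (i + 1))
      = Module.finrank K ↥(sfil e i * sfil e i) + 2 := by
    unfold cgenus at hg
    rw [finrank_sfil hli (by omega : i ≤ n), finrank_sfil hli hin] at hg
    push_cast at hg
    omega
  -- the elements u1 = e_i e_{i+1}, u2 = e_{i+1}^2
  set u1 := e I2 * e I3 with hu1
  set u2 := e I3 * e I3 with hu2
  have hu1ne : u1 ≠ 0 := mul_ne_zero he2 he3
  have hu2ne : u2 ≠ 0 := mul_ne_zero he3 he3
  have hu1v : plval p u1 = (plval p (e I2)) + (plval p (e I3)) := plval_mul p he2 he3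
  have hu2v : plval p u2 = (plval p (e I3)) + (plval p (e I3)) := plval_mul p he3 he3
  have hBV : sfil e i * sfil e i ≤ Vsub p ((plval p (e I2)) + (plval p (e I2))) :=
    le_trans (mul_le_mul' hb2 hb2) Vsub_mul
  have hu1B : u1 ∉ sfil e i * sfil e i := fun h =>
    notMem_Vsub hu1ne (by omega) (hBV h)
  haveI : FiniteDimensional K ↥(Submodule.span K ({u1} : Set (RatFunc K))) :=
    FiniteDimensional.span_of_finite K (Set.finite_singleton u1)
  haveI : FiniteDimensional K ↥(Submodule.span K ({u2} : Set (RatFunc K))) :=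
    FiniteDimensional.span_of_finite K (Set.finite_singleton u2)
  set B := sfil e i * sfil e i with hB
  set T : Submodule K (RatFunc K) := (B ⊔ Submodule.span K {u1}) ⊔ Submodule.span K {u2}
    with hT_def
  have hT1V : B ⊔ Submodule.span K {u1} ≤ Vsub p ((plval p (e I2)) + (plval p (e I3))) := by
    apply sup_le (le_trans hBV (Vsub_mono (by omega)))
    rw [Submodule.span_le, Set.singleton_subset_iff]
    exact Or.inr (le_of_eq hu1v.symm)
  have hu2T1 : u2 ∉ B ⊔ Submodule.span K {u1} := fun h =>
    notMem_Vsub hu2ne (by omega) (hT1V h)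
  have hTrank : Module.finrank K ↥T = Module.finrank K ↥B + 2 := by
    rw [hT_def, finrank_sup_span_singleton hu2T1, finrank_sup_span_singleton hu1B]
  have hTle : T ≤ sfil e (i + 1) * sfil e (i + 1) := by
    apply sup_le (sup_le _ _) _
    · exact mul_le_mul' (sfil_mono e (by omega)) (sfil_mono e (by omega))
    · rw [Submodule.span_le, Set.singleton_subset_iff]
      exact Submodule.mul_mem_mul (mem_sfil e (by simp only [hI2]; first | omega | simp; omega | simp))
        (mem_sfil e (by simp only [hI3]; first | omega | simp; omega | simp))
    · rw [Submodule.span_le, Set.singleton_subset_iff]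
      exact Submodule.mul_mem_mul (mem_sfil e (by simp only [hI3]; first | omega | simp; omega | simp))
        (mem_sfil e (by simp only [hI3]; first | omega | simp; omega | simp))
  have hT : T = sfil e (i + 1) * sfil e (i + 1) :=
    Submodule.eq_of_le_of_finrank_le hTle (by rw [hBdim, hTrank])
  -- key: e_a * e_{i+1} ∈ S_i^2 for a < i-1
  have keyJ : ∀ a : Fin n, (a : ℕ) < i - 1 → e a * e I3 ∈ B := by
    intro a ha
    have hav : (plval p (e I1)) ≤ plval p (e a) :=
      hanti.antitone (show a ≤ I1 by rw [Fin.le_def]; simp [hI1]; omega)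
    have hane : e a ≠ 0 := hli.ne_zero a
    have hxv : plval p (e a * e I3) = plval p (e a) + (plval p (e I3)) := plval_mul p hane he3
    have hx : e a * e I3 ∈ T := by
      rw [hT]
      exact Submodule.mul_mem_mul (mem_sfil e (by omega)) (mem_sfil e (by simp only [hI3]; first | omega | simp; omega | simp))
    rw [hT_def, Submodule.mem_sup] at hx
    obtain ⟨y, hy, z, hz, hxyz⟩ := hx
    rw [Submodule.mem_sup] at hy
    obtain ⟨s, hs, z1, hz1, rfl⟩ := hy
    obtain ⟨c2, rfl⟩ := Submodule.mem_span_singleton.mp hz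
    obtain ⟨c1, rfl⟩ := Submodule.mem_span_singleton.mp hz1
    -- hxyz : s + c1 • u1 + c2 • u2 = e a * e I3
    have hxV : ∀ c : ℤ, c ≤ plval p (e a) + (plval p (e I3)) → e a * e I3 ∈ Vsub p c :=
      fun c hc => Or.inr (by rw [hxv]; exact hc)
    have hsV : ∀ c : ℤ, c ≤ (plval p (e I2)) + (plval p (e I2)) → s ∈ Vsub p c :=
      fun c hc => Vsub_mono hc (hBV hs)
    have hc2 : c2 = 0 := by
      by_contra hc2
      have hmem : c2 • u2 ∈ Vsub p ((plval p (e I3)) + (plval p (e I3)) + 1) := by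
        have : c2 • u2 = e a * e I3 - s - c1 • u1 := by rw [← hxyz]; abel
        rw [this]
        refine sub_mem (sub_mem (hxV _ (by omega)) (hsV _ (by omega))) ?_
        exact Submodule.smul_mem _ _ (Or.inr (by rw [hu1v]; omega))
      exact notMem_Vsub (smul_ne_zero hc2 hu2ne)
        (by rw [plval_smul p hc2, hu2v]; omega) hmem
    rw [hc2, zero_smul, add_zero] at hxyz
    have hc1 : c1 = 0 := by
      by_contra hc1
      have hmem : c1 • u1 ∈ Vsub p ((plval p (e I2)) + (plval p (e I3)) + 1) := by
        have : c1 • u1 = e a * e I3 - s := by rw [← hxyz]; abel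
        rw [this]
        exact sub_mem (hxV _ (by omega)) (hsV _ (by omega))
      exact notMem_Vsub (smul_ne_zero hc1 hu1ne)
        (by rw [plval_smul p hc1, hu1v]; omega) hmem
    rw [hc1, zero_smul, add_zero] at hxyz
    rw [← hxyz]
    exact hs
  -- M ≤ B
  have hMB : sfil e (i - 1) * sfil e (i + 1) ≤ B := by
    rw [hsplit3, Submodule.mul_sup]
    apply sup_le
    · exact mul_le_mul' (sfil_mono e (by omega)) le_rfl
    · rw [Submodule.mul_le]
      intro x hx y hy
      obtain ⟨c, rfl⟩ := Submodule.mem_span_singleton.mp hy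
      rw [mul_smul_comm]
      apply Submodule.smul_mem
      have hsub : sfil e (i - 1) ≤
          Submodule.comap (LinearMap.mulRight K (e I3)) B := by
        apply Submodule.span_le.mpr
        rintro _ ⟨j, hj, rfl⟩
        simpa using keyJ j hj
      simpa using hsub hx
  -- B ≤ A ⊔ span {e I2 * e I2}
  set A := sfil e (i - 1) * sfil e i with hA
  set u := e I2 * e I2 with hu
  have hune : u ≠ 0 := mul_ne_zero he2 he2
  have huv : plval p u = (plval p (e I2)) + (plval p (e I2)) := plval_mul p he2 he2
  have hEle : Submodule.span K ({e I2} : Set (RatFunc K)) ≤ sfil e i := by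
    rw [Submodule.span_le, Set.singleton_subset_iff]
    exact mem_sfil e (by simp only [hI2]; first | omega | simp; omega | simp)
  have hBAu : B ≤ A ⊔ Submodule.span K {u} := by
    calc B = (sfil e (i - 1) ⊔ Submodule.span K {e I2}) * sfil e i := by rw [← hsplit2]
    _ = A ⊔ Submodule.span K {e I2} * sfil e i := by rw [Submodule.sup_mul]
    _ ≤ A ⊔ Submodule.span K {u} := by
        apply sup_le le_sup_left
        calc Submodule.span K ({e I2} : Set (RatFunc K)) * sfil e i
            = Submodule.span K {e I2} * (sfil e (i - 1) ⊔ Submodule.span K {e I2}) := by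
              rw [← hsplit2]
        _ = Submodule.span K {e I2} * sfil e (i - 1)
              ⊔ Submodule.span K {e I2} * Submodule.span K {e I2} := by
              rw [Submodule.mul_sup]
        _ ≤ A ⊔ Submodule.span K {u} := by
            apply sup_le
            · refine le_trans ?_ le_sup_left
              rw [Submodule.mul_le]
              intro x hx y hy
              rw [mul_comm]
              exact Submodule.mul_mem_mul hy (hEle hx)
            · refine le_trans (le_of_eq ?_) le_sup_right
              rw [Submodule.span_mul_span, Set.singleton_mul_singleton]
  -- u3 ∉ A, u3 ∈ M
  set u3 := e I1 * e I3 with hu3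
  have hu3ne : u3 ≠ 0 := mul_ne_zero he1 he3
  have hu3v : plval p u3 = (plval p (e I1)) + (plval p (e I3)) := plval_mul p he1 he3
  have hAV : A ≤ Vsub p ((plval p (e I1)) + (plval p (e I2))) := le_trans (mul_le_mul' hb1 hb2) Vsub_mul
  have hu3A : u3 ∉ A := fun h => notMem_Vsub hu3ne (by omega) (hAV h)
  have huA : u ∉ A := fun h => notMem_Vsub hune (by omega) (hAV h)
  have hu3M : u3 ∈ sfil e (i - 1) * sfil e (i + 1) :=
    Submodule.mul_mem_mul (mem_sfil e (by simp only [hI1]; first | omega | simp; omega | simp)) (mem_sfil e (by simp only [hI3]; first | omega | simp; omega | simp))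
  haveI : FiniteDimensional K ↥(Submodule.span K ({u3} : Set (RatFunc K))) :=
    FiniteDimensional.span_of_finite K (Set.finite_singleton u3)
  haveI : FiniteDimensional K ↥(Submodule.span K ({u} : Set (RatFunc K))) :=
    FiniteDimensional.span_of_finite K (Set.finite_singleton u)
  have hsup3M : A ⊔ Submodule.span K {u3} ≤ sfil e (i - 1) * sfil e (i + 1) := by
    apply sup_le
    · exact mul_le_mul' le_rfl (sfil_mono e (by omega))
    · rw [Submodule.span_le, Set.singleton_subset_iff]
      exact hu3M
  have hrank1 : Module.finrank K ↥A + 1 ≤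
      Module.finrank K ↥(sfil e (i - 1) * sfil e (i + 1)) := by
    rw [← finrank_sup_span_singleton hu3A]
    exact Submodule.finrank_mono hsup3M
  have hrank2 : Module.finrank K ↥B ≤ Module.finrank K ↥A + 1 := by
    rw [← finrank_sup_span_singleton huA]
    exact Submodule.finrank_mono hBAu
  have hmain : B = sfil e (i - 1) * sfil e (i + 1) :=
    (Submodule.eq_of_le_of_finrank_le hMB (by omega)).symm
  refine ⟨hmain, ?_⟩
  intro q
  obtain ⟨⟨s1, hs1S, hs1ne, hs1v⟩, hlb1⟩ := hD (i - 1) (by omega) (by omega) q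
  obtain ⟨⟨s2, hs2S, hs2ne, hs2v⟩, hlb2⟩ := hD i (by omega) (by omega) q
  obtain ⟨⟨s3, hs3S, hs3ne, hs3v⟩, hlb3⟩ := hD (i + 1) (by omega) hin q
  have hle1 : sfil e (i - 1) ≤ Vsub q (-(D (i - 1) q)) := by
    intro f hf
    rcases eq_or_ne f 0 with rfl | h0
    · exact Or.inl rfl
    · exact Or.inr (hlb1 ⟨f, hf, h0, rfl⟩)
  have hle2 : sfil e i ≤ Vsub q (-(D i q)) := by
    intro f hf
    rcases eq_or_ne f 0 with rfl | h0
    · exact Or.inl rfl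
    · exact Or.inr (hlb2 ⟨f, hf, h0, rfl⟩)
  have hle3 : sfil e (i + 1) ≤ Vsub q (-(D (i + 1) q)) := by
    intro f hf
    rcases eq_or_ne f 0 with rfl | h0
    · exact Or.inl rfl
    · exact Or.inr (hlb3 ⟨f, hf, h0, rfl⟩)
  have hup : -(D i q) + -(D i q) ≤ -(D (i - 1) q) + -(D (i + 1) q) := by
    have hm : s1 * s3 ∈ B := by
      rw [hmain]
      exact Submodule.mul_mem_mul hs1S hs3S
    have hv := (le_trans (mul_le_mul' hle2 hle2) Vsub_mul) hm
    have h := hv.resolve_left (mul_ne_zero hs1ne hs3ne)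
    rwa [plval_mul q hs1ne hs3ne, hs1v, hs3v] at h
  have hdown : -(D (i - 1) q) + -(D (i + 1) q) ≤ -(D i q) + -(D i q) := by
    have hm : s2 * s2 ∈ sfil e (i - 1) * sfil e (i + 1) := by
      rw [← hmain]
      exact Submodule.mul_mem_mul hs2S hs2S
    have hv := (le_trans (mul_le_mul' hle1 hle3) Vsub_mul) hm
    have h := hv.resolve_left (mul_ne_zero hs2ne hs2ne)
    rwa [plval_mul q hs2ne hs2ne, hs2v] at h
  omega


end FFF
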